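/- Let ϱ be a nonnegative function in L¹(ℝ²) with ∫ ln(1/|y|) ϱ(y) dy finite, let ε ∈ (0,1], and let ζ(y) = ε^{-2} ϱ((y − z)/ε) be a scaled translate (z ∈ ℝ²). If ϱ is radially symmetric and decreasing, then for every x ∈ ℝ², ∫ ln(ε/|x − y|) ζ(y) dy ≤ ∫_{ℝ²} ln(1/|y|) ϱ(y) dy. -/

import Mathlib

open MeasureTheory

/-- Euclidean norm on ℝ². -/

noncomputable def nrm (x : ℝ × ℝ) : ℝ := Real.sqrt (x.1 ^ 2 + x.2 ^ 2)

lemma nrm_nonneg (x : ℝ × ℝ) : 0 ≤ nrm x := Real.sqrt_nonneg _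

lemma nrm_eq_zero {x : ℝ × ℝ} : nrm x = 0 ↔ x = 0 := by
  unfold nrm
  rw [Real.sqrt_eq_zero (by positivity)]
  constructor
  · intro h
    have h1 : x.1 = 0 ∧ x.2 = 0 := by
      constructor <;> nlinarith [sq_nonneg x.1, sq_nonneg x.2]
    exact Prod.ext h1.1 h1.2
  · rintro rfl; simp

lemma nrm_sub_comm (a b : ℝ × ℝ) : nrm (a - b) = nrm (b - a) := by
  unfold nrm
  have h1 : (a - b).1 = -(b - a).1 := by simp
  have h2 : (a - b).2 = -(b - a).2 := by simp
  rw [h1, h2]; ring_nf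

lemma continuous_nrm : Continuous nrm := by
  unfold nrm; fun_prop

lemma nrm_smul {c : ℝ} (hc : 0 ≤ c) (x : ℝ × ℝ) : nrm (c • x) = c * nrm x := by
  unfold nrm
  have : (c • x).1 ^ 2 + (c • x).2 ^ 2 = c ^ 2 * (x.1 ^ 2 + x.2 ^ 2) := by
    simp [Prod.smul_def, smul_eq_mul]; ring
  rw [this, Real.sqrt_mul (by positivity), Real.sqrt_sq hc]

lemma nrm_pt {r : ℝ} (hr : 0 ≤ r) : nrm (r, 0) = r := by
  unfold nrm; simp [Real.sqrt_sq hr]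

lemma abs_fst_le_nrm (x : ℝ × ℝ) : |x.1| ≤ nrm x := by
  unfold nrm
  rw [← Real.sqrt_sq_eq_abs]
  exact Real.sqrt_le_sqrt (by nlinarith [sq_nonneg x.2])

lemma abs_snd_le_nrm (x : ℝ × ℝ) : |x.2| ≤ nrm x := by
  unfold nrm
  rw [← Real.sqrt_sq_eq_abs]
  exact Real.sqrt_le_sqrt (by nlinarith [sq_nonneg x.1])

/-- finiteness of Euclidean-ball-in-nrm volume -/
lemma vol_nrm_lt_top {a : ℝ × ℝ} {r : ℝ} : volume {w : ℝ × ℝ | nrm (w - a) ≤ r} < ⊤ := by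
  apply lt_of_le_of_lt (measure_mono (?_ : _ ⊆ Metric.closedBall a r))
  · exact measure_closedBall_lt_top
  · intro w hw
    simp only [Set.mem_setOf_eq] at hw
    rw [Metric.mem_closedBall]
    have h : dist w a ≤ nrm (w - a) := by
      rw [Prod.dist_eq]
      rcases max_cases (dist w.1 a.1) (dist w.2 a.2) with ⟨h1, _⟩ | ⟨h1, _⟩ <;> rw [h1]
      · rw [Real.dist_eq]; simpa using abs_fst_le_nrm (w - a)
      · rw [Real.dist_eq]; simpa using abs_snd_le_nrm (w - a)
    linarith



lemma setIntegral_translate_le (ϱ : ℝ × ℝ → ℝ) (hnonneg : ∀ x, 0 ≤ ϱ x)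
    (hint : Integrable ϱ)
    (hdec : ∀ x y : ℝ × ℝ, nrm x ≤ nrm y → ϱ y ≤ ϱ x)
    (a : ℝ × ℝ) {r : ℝ} (hr : 0 ≤ r) (S : Set ℝ)
    (hmeas : MeasurableSet {w : ℝ × ℝ | nrm w ∈ S})
    (hfin : volume {w : ℝ × ℝ | nrm w ∈ S} < ⊤)
    (hmem : ∀ s, s ∈ S → s ≤ r)
    (hnmem : ∀ s : ℝ, 0 ≤ s → s ∉ S → r ≤ s) :
    ∫ w in {w : ℝ × ℝ | nrm (w - a) ∈ S}, ϱ w ≤ ∫ w in {w : ℝ × ℝ | nrm w ∈ S}, ϱ w := by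
  set B0 : Set (ℝ × ℝ) := {w | nrm w ∈ S} with hB0
  have hpre : {w : ℝ × ℝ | nrm (w - a) ∈ S} = (fun w => w + (-a)) ⁻¹' B0 := by
    ext w; simp [B0, sub_eq_add_neg]
  set Ba : Set (ℝ × ℝ) := (fun w => w + (-a)) ⁻¹' B0 with hBa
  rw [hpre]
  have hmeasa : MeasurableSet Ba := (measurable_add_const (-a)) hmeas
  have hvol_eq : volume Ba = volume B0 := measure_preimage_add_right volume (-a) B0
  have hfina : volume Ba < ⊤ := by rw [hvol_eq]; exact hfin
  -- diff sets have equal volume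
  have hIa : volume (Ba ∩ B0) + volume (Ba \ B0) = volume Ba := measure_inter_add_diff Ba hmeas
  have hI0 : volume (B0 ∩ Ba) + volume (B0 \ Ba) = volume B0 := measure_inter_add_diff B0 hmeasa
  have hIcomm : volume (Ba ∩ B0) = volume (B0 ∩ Ba) := by rw [Set.inter_comm]
  have hIfin : volume (Ba ∩ B0) ≠ ⊤ :=
    (lt_of_le_of_lt (measure_mono Set.inter_subset_right) hfin).ne
  have hdiff_eq : volume (Ba \ B0) = volume (B0 \ Ba) := by
    have : volume (Ba ∩ B0) + volume (Ba \ B0) = volume (Ba ∩ B0) + volume (B0 \ Ba) := by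
      rw [hIa, hvol_eq, ← hI0, hIcomm]
    exact (ENNReal.add_right_inj hIfin).1 this
  set c : ℝ := ϱ (r, 0) with hc
  have hc0 : 0 ≤ c := hnonneg _
  -- bound on Ba \ B0
  have hup : ∫ w in Ba \ B0, ϱ w ≤ (volume (Ba \ B0)).toReal * c := by
    have h1 : ∫ w in Ba \ B0, ϱ w ≤ ∫ _w in Ba \ B0, c :=
      setIntegral_mono_on hint.integrableOn
        (integrableOn_const (lt_of_le_of_lt (measure_mono Set.diff_subset) hfina).ne)
        (hmeasa.diff hmeas) (fun w hw => by
          apply hdec; rw [nrm_pt hr]; exact hnmem _ (nrm_nonneg w) hw.2)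
    simpa [setIntegral_const, smul_eq_mul, measureReal_def] using h1
  have hlow : (volume (B0 \ Ba)).toReal * c ≤ ∫ w in B0 \ Ba, ϱ w := by
    have h1 : ∫ _w in B0 \ Ba, c ≤ ∫ w in B0 \ Ba, ϱ w :=
      setIntegral_mono_on
        (integrableOn_const (lt_of_le_of_lt (measure_mono Set.diff_subset) hfin).ne)
        hint.integrableOn
        (hmeas.diff hmeasa) (fun w hw => by
          apply hdec; rw [nrm_pt hr]; exact hmem _ hw.1)
    simpa [setIntegral_const, smul_eq_mul, measureReal_def] using h1
  have hsplit_a : (∫ w in Ba ∩ B0, ϱ w) + ∫ w in Ba \ B0, ϱ w = ∫ w in Ba, ϱ w :=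
    integral_inter_add_diff hmeas hint.integrableOn
  have hsplit_0 : (∫ w in B0 ∩ Ba, ϱ w) + ∫ w in B0 \ Ba, ϱ w = ∫ w in B0, ϱ w :=
    integral_inter_add_diff hmeasa hint.integrableOn
  have hIeq : ∫ w in Ba ∩ B0, ϱ w = ∫ w in B0 ∩ Ba, ϱ w := by rw [Set.inter_comm]
  calc ∫ w in Ba, ϱ w = (∫ w in Ba ∩ B0, ϱ w) + ∫ w in Ba \ B0, ϱ w := hsplit_a.symm
    _ ≤ (∫ w in B0 ∩ Ba, ϱ w) + ∫ w in B0 \ Ba, ϱ w := by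
        apply add_le_add (le_of_eq hIeq)
        calc ∫ w in Ba \ B0, ϱ w ≤ (volume (Ba \ B0)).toReal * c := hup
          _ = (volume (B0 \ Ba)).toReal * c := by rw [hdiff_eq]
          _ ≤ ∫ w in B0 \ Ba, ϱ w := hlow
    _ = ∫ w in B0, ϱ w := hsplit_0


lemma intOn_if (b c : ℝ) : IntegrableOn (fun t => if t < b then c else 0) (Set.Ioi (0:ℝ)) := by
  have h : (fun t : ℝ => if t < b then c else 0) = (Set.Iio b).indicator (fun _ => c) := by
    ext t; simp [Set.indicator_apply]
  rw [h]
  rw [IntegrableOn, integrable_indicator_iff measurableSet_Iio]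
  refine integrableOn_const ?_
  apply ne_of_lt
  rw [Measure.restrict_apply measurableSet_Iio]
  calc volume (Set.Iio b ∩ Set.Ioi 0) ≤ volume (Set.Ioo 0 b) := by
        apply measure_mono; intro t ht; exact ⟨ht.2, ht.1⟩
    _ < ⊤ := by rw [Real.volume_Ioo]; exact ENNReal.ofReal_lt_top

lemma int_if (b c : ℝ) : ∫ t in Set.Ioi (0:ℝ), (if t < b then c else 0) = c * max b 0 := by
  have h : (fun t : ℝ => if t < b then c else 0) = (Set.Iio b).indicator (fun _ => c) := by
    ext t; simp [Set.indicator_apply]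
  rw [h, setIntegral_indicator measurableSet_Iio]
  have : Set.Ioi (0:ℝ) ∩ Set.Iio b = Set.Ioo 0 b := Set.Ioi_inter_Iio
  rw [this, setIntegral_const, Real.volume_real_Ioo, smul_eq_mul, mul_comm]
  norm_num




lemma max_neg_sub_max (x : ℝ) : max (-x) 0 - max x 0 = -x := by
  rcases le_total 0 x with h | h
  · rw [max_eq_left h, max_eq_right (by linarith)]; ring
  · rw [max_eq_right h, max_eq_left (by linarith)]; ring

lemma max_neg_add_max (x : ℝ) : max (-x) 0 + max x 0 = |x| := by
  rcases le_total 0 x with h | h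
  · rw [max_eq_left h, max_eq_right (by linarith), abs_of_nonneg h]; ring
  · rw [max_eq_right h, max_eq_left (by linarith), abs_of_nonpos h]; ring

lemma key_rep (ϱ : ℝ × ℝ → ℝ) (hnonneg : ∀ x, 0 ≤ ϱ x) (hint : Integrable ϱ)
    (a : ℝ × ℝ) (hK : Integrable (fun w => Real.log (1 / nrm (w - a)) * ϱ w)) :
    (∫ w, Real.log (1 / nrm (w - a)) * ϱ w)
      = ∫ t in Set.Ioi (0:ℝ),
          ((∫ w in {w : ℝ × ℝ | nrm (w - a) < Real.exp (-t)}, ϱ w)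
            - ∫ w in {w : ℝ × ℝ | Real.exp t < nrm (w - a)}, ϱ w)
    ∧ Integrable (fun t =>
          (∫ w in {w : ℝ × ℝ | nrm (w - a) < Real.exp (-t)}, ϱ w)
            - ∫ w in {w : ℝ × ℝ | Real.exp t < nrm (w - a)}, ϱ w)
        (volume.restrict (Set.Ioi (0:ℝ))) := by
  set ν := volume.restrict (Set.Ioi (0:ℝ)) with hν
  set f : (ℝ × ℝ) × ℝ → ℝ := fun p =>
    (if nrm (p.1 - a) < Real.exp (-p.2) then ϱ p.1 else 0)
      - (if Real.exp p.2 < nrm (p.1 - a) then ϱ p.1 else 0) with hf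
  have hae : ∀ᵐ w : ℝ × ℝ, nrm (w - a) ≠ 0 := by
    rw [MeasureTheory.ae_iff]
    have : {w : ℝ × ℝ | ¬ nrm (w - a) ≠ 0} = {a} := by
      ext w; simp [nrm_eq_zero, sub_eq_zero]
    rw [this]; exact measure_singleton a
  -- fiberwise facts
  have hfib : ∀ w : ℝ × ℝ, nrm (w - a) ≠ 0 →
      Integrable (fun t => f (w, t)) ν ∧
      (∫ t, f (w, t) ∂ν) = Real.log (1 / nrm (w - a)) * ϱ w ∧
      (∫ t, ‖f (w, t)‖ ∂ν) = |Real.log (1 / nrm (w - a))| * ϱ w := by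
    intro w hw
    set s := nrm (w - a) with hs
    have hs0 : 0 < s := lt_of_le_of_ne (nrm_nonneg _) (Ne.symm hw)
    set c := ϱ w with hcdef
    have hc0 : 0 ≤ c := hnonneg w
    have hcond1 : ∀ t : ℝ, (s < Real.exp (-t)) ↔ t < -Real.log s := by
      intro t
      rw [show (s < Real.exp (-t)) ↔ Real.log s < -t from (Real.log_lt_iff_lt_exp hs0).symm]
      constructor <;> intro h <;> linarith
    have hcond2 : ∀ t : ℝ, (Real.exp t < s) ↔ t < Real.log s := by
      intro t
      rw [← Real.exp_lt_exp (x := t) (y := Real.log s), Real.exp_log hs0]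
    have hfe : (fun t => f (w, t))
        = fun t => (if t < -Real.log s then c else 0) - (if t < Real.log s then c else 0) := by
      ext t
      simp only [hf]
      rw [if_congr (hcond1 t) rfl rfl, if_congr (hcond2 t) rfl rfl]
    have hint1 := intOn_if (-Real.log s) c
    have hint2 := intOn_if (Real.log s) c
    refine ⟨?_, ?_, ?_⟩
    · rw [hfe]; exact hint1.sub hint2
    · rw [hfe]
      rw [integral_sub hint1 hint2, int_if, int_if]
      rw [one_div, Real.log_inv]
      rw [← mul_sub, max_neg_sub_max]
      ring
    · have hne : ∀ t ∈ Set.Ioi (0:ℝ), ‖f (w, t)‖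
          = (if t < -Real.log s then c else 0) + (if t < Real.log s then c else 0) := by
        intro t ht
        simp only [Set.mem_Ioi] at ht
        have : f (w, t) = (if t < -Real.log s then c else 0) - (if t < Real.log s then c else 0) := by
          rw [show f (w,t) = (fun t => f (w,t)) t from rfl, hfe]
        rw [this]
        by_cases h1 : t < -Real.log s <;> by_cases h2 : t < Real.log s
        · exfalso; linarith
        · simp [h1, h2, Real.norm_eq_abs, abs_of_nonneg hc0]
        · simp [h1, h2, Real.norm_eq_abs, abs_of_nonneg hc0]
        · simp [h1, h2]
      rw [hν, setIntegral_congr_fun measurableSet_Ioi hne]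
      rw [integral_add hint1 hint2, int_if, int_if, one_div, Real.log_inv, abs_neg]
      rw [← mul_add, max_neg_add_max]
      ring
  -- measurability
  have hcont1 : Continuous (fun p : (ℝ × ℝ) × ℝ => nrm (p.1 - a)) :=
    continuous_nrm.comp (continuous_fst.sub continuous_const)
  have hm1 : MeasurableSet {p : (ℝ × ℝ) × ℝ | nrm (p.1 - a) < Real.exp (-p.2)} :=
    (isOpen_lt hcont1 (Real.continuous_exp.comp continuous_snd.neg)).measurableSet
  have hm2 : MeasurableSet {p : (ℝ × ℝ) × ℝ | Real.exp p.2 < nrm (p.1 - a)} :=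
    (isOpen_lt (Real.continuous_exp.comp continuous_snd) hcont1).measurableSet
  have hmeasf : AEStronglyMeasurable f (volume.prod ν) := by
    have h1 : AEStronglyMeasurable (fun p : (ℝ × ℝ) × ℝ => ϱ p.1) (volume.prod ν) :=
      hint.aestronglyMeasurable.comp_fst
    have hfeq : f = fun p =>
        ({p : (ℝ × ℝ) × ℝ | nrm (p.1 - a) < Real.exp (-p.2)}.indicator (fun p => ϱ p.1) p)
          - ({p : (ℝ × ℝ) × ℝ | Real.exp p.2 < nrm (p.1 - a)}.indicator (fun p => ϱ p.1) p) := by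
      ext p; simp [hf, Set.indicator_apply]
    rw [hfeq]
    exact (h1.indicator hm1).sub (h1.indicator hm2)
  -- product integrability
  have hprod : Integrable f (volume.prod ν) := by
    rw [integrable_prod_iff hmeasf]
    constructor
    · filter_upwards [hae] with w hw
      exact (hfib w hw).1
    · have habs : Integrable (fun w : ℝ × ℝ => |Real.log (1 / nrm (w - a))| * ϱ w) := by
        apply hK.abs.congr
        filter_upwards with w
        rw [abs_mul, abs_of_nonneg (hnonneg w)]
      apply habs.congr
      filter_upwards [hae] with w hw
      exact ((hfib w hw).2.2).symm
  -- Fubini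
  have hswap : (∫ w : ℝ × ℝ, ∫ t : ℝ, f (w, t) ∂ν) = ∫ t : ℝ, (∫ w : ℝ × ℝ, f (w, t)) ∂ν :=
    integral_integral_swap hprod
  -- inner integral over w
  have hinner : ∀ t : ℝ, (∫ w, f (w, t))
      = (∫ w in {w : ℝ × ℝ | nrm (w - a) < Real.exp (-t)}, ϱ w)
        - ∫ w in {w : ℝ × ℝ | Real.exp t < nrm (w - a)}, ϱ w := by
    intro t
    have hA : MeasurableSet {w : ℝ × ℝ | nrm (w - a) < Real.exp (-t)} :=
      (isOpen_lt (continuous_nrm.comp (continuous_id.sub continuous_const))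
        continuous_const).measurableSet
    have hC : MeasurableSet {w : ℝ × ℝ | Real.exp t < nrm (w - a)} :=
      (isOpen_lt continuous_const
        (continuous_nrm.comp (continuous_id.sub continuous_const))).measurableSet
    have h1 : (fun w : ℝ × ℝ => f (w, t))
        = fun w => ({w : ℝ × ℝ | nrm (w - a) < Real.exp (-t)}.indicator ϱ w)
          - ({w : ℝ × ℝ | Real.exp t < nrm (w - a)}.indicator ϱ w) := by
      ext w; simp [hf, Set.indicator_apply]
    rw [h1, integral_sub (hint.indicator hA) (hint.indicator hC),
      integral_indicator hA, integral_indicator hC]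
  constructor
  · calc (∫ w, Real.log (1 / nrm (w - a)) * ϱ w)
        = ∫ w : ℝ × ℝ, ∫ t : ℝ, f (w, t) ∂ν := by
          apply integral_congr_ae
          filter_upwards [hae] with w hw
          exact ((hfib w hw).2.1).symm
    _ = ∫ t : ℝ, (∫ w : ℝ × ℝ, f (w, t)) ∂ν := hswap
    _ = _ := by
        rw [hν]
        apply integral_congr_ae
        filter_upwards with t
        exact hinner t
  · have := hprod.integral_prod_right
    apply this.congr
    filter_upwards with t
    exact hinner t


lemma ball_le (ϱ : ℝ × ℝ → ℝ) (hnonneg : ∀ x, 0 ≤ ϱ x) (hint : Integrable ϱ)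
    (hdec : ∀ x y : ℝ × ℝ, nrm x ≤ nrm y → ϱ y ≤ ϱ x) (a : ℝ × ℝ) {r : ℝ} (hr : 0 < r) :
    ∫ w in {w : ℝ × ℝ | nrm (w - a) < r}, ϱ w ≤ ∫ w in {w : ℝ × ℝ | nrm w < r}, ϱ w := by
  have h := setIntegral_translate_le ϱ hnonneg hint hdec a hr.le (Set.Iio r)
    ((isOpen_lt continuous_nrm continuous_const).measurableSet)
    (lt_of_le_of_lt (measure_mono (fun w (hw : nrm w < r) => by
      show nrm (w - 0) ≤ r; rw [sub_zero]; exact hw.le)) (vol_nrm_lt_top (a := 0) (r := r)))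
    (fun s hs => le_of_lt hs) (fun s _ hs => le_of_not_gt hs)
  exact h

lemma closed_ball_le (ϱ : ℝ × ℝ → ℝ) (hnonneg : ∀ x, 0 ≤ ϱ x) (hint : Integrable ϱ)
    (hdec : ∀ x y : ℝ × ℝ, nrm x ≤ nrm y → ϱ y ≤ ϱ x) (a : ℝ × ℝ) {r : ℝ} (hr : 0 ≤ r) :
    ∫ w in {w : ℝ × ℝ | nrm (w - a) ≤ r}, ϱ w ≤ ∫ w in {w : ℝ × ℝ | nrm w ≤ r}, ϱ w := by
  have h := setIntegral_translate_le ϱ hnonneg hint hdec a hr (Set.Iic r)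
    ((isClosed_le continuous_nrm continuous_const).measurableSet)
    (lt_of_le_of_lt (measure_mono (fun w (hw : nrm w ≤ r) => by
      show nrm (w - 0) ≤ r; rw [sub_zero]; exact hw)) (vol_nrm_lt_top (a := 0) (r := r)))
    (fun s hs => hs) (fun s _ hs => (lt_of_not_ge hs).le)
  exact h

lemma outer_ge (ϱ : ℝ × ℝ → ℝ) (hnonneg : ∀ x, 0 ≤ ϱ x) (hint : Integrable ϱ)
    (hdec : ∀ x y : ℝ × ℝ, nrm x ≤ nrm y → ϱ y ≤ ϱ x) (a : ℝ × ℝ) {R : ℝ} (hR : 0 ≤ R) :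
    ∫ w in {w : ℝ × ℝ | R < nrm w}, ϱ w ≤ ∫ w in {w : ℝ × ℝ | R < nrm (w - a)}, ϱ w := by
  have hcb := closed_ball_le ϱ hnonneg hint hdec a hR
  have hma : MeasurableSet {w : ℝ × ℝ | nrm (w - a) ≤ R} :=
    (isClosed_le (continuous_nrm.comp (continuous_id.sub continuous_const))
      continuous_const).measurableSet
  have hm0 : MeasurableSet {w : ℝ × ℝ | nrm w ≤ R} :=
    (isClosed_le continuous_nrm continuous_const).measurableSet
  have hca : {w : ℝ × ℝ | nrm (w - a) ≤ R}ᶜ = {w : ℝ × ℝ | R < nrm (w - a)} := by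
    ext w; simp [not_le]
  have hc0 : {w : ℝ × ℝ | nrm w ≤ R}ᶜ = {w : ℝ × ℝ | R < nrm w} := by
    ext w; simp [not_le]
  have ha := integral_add_compl hma hint
  have h0 := integral_add_compl hm0 hint
  rw [hca] at ha
  rw [hc0] at h0
  linarith

lemma key_mono (ϱ : ℝ × ℝ → ℝ) (hnonneg : ∀ x, 0 ≤ ϱ x) (hint : Integrable ϱ)
    (hdec : ∀ x y : ℝ × ℝ, nrm x ≤ nrm y → ϱ y ≤ ϱ x) (a : ℝ × ℝ)
    (hK : Integrable (fun w => Real.log (1 / nrm (w - a)) * ϱ w))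
    (hK0 : Integrable (fun w => Real.log (1 / nrm w) * ϱ w)) :
    (∫ w, Real.log (1 / nrm (w - a)) * ϱ w) ≤ ∫ w, Real.log (1 / nrm w) * ϱ w := by
  have hK0' : Integrable (fun w : ℝ × ℝ => Real.log (1 / nrm (w - 0)) * ϱ w) := by
    simpa [sub_zero] using hK0
  obtain ⟨repa, inta⟩ := key_rep ϱ hnonneg hint a hK
  obtain ⟨rep0, int0⟩ := key_rep ϱ hnonneg hint 0 hK0'
  simp only [sub_zero] at rep0 int0
  rw [repa, rep0]
  apply integral_mono inta int0
  intro t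
  apply sub_le_sub
  · exact ball_le ϱ hnonneg hint hdec a (Real.exp_pos (-t))
  · exact outer_ge ϱ hnonneg hint hdec a (Real.exp_pos t).le

theorem log_potential_upper_bound (ϱ : ℝ × ℝ → ℝ) (ε : ℝ) (z : ℝ × ℝ)
    (hε : 0 < ε) (hε1 : ε ≤ 1)
    (hnonneg : ∀ x, 0 ≤ ϱ x) (hint : Integrable ϱ)
    (hlog : Integrable (fun y : ℝ × ℝ => Real.log (1 / nrm y) * ϱ y))
    (hdec : ∀ x y : ℝ × ℝ, nrm x ≤ nrm y → ϱ y ≤ ϱ x)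
    (hintk : ∀ x : ℝ × ℝ, Integrable (fun y : ℝ × ℝ =>
        Real.log (ε / nrm (x - y)) * (ε⁻¹ ^ 2 * ϱ ((y.1 - z.1) / ε, (y.2 - z.2) / ε)))) :
    ∀ x : ℝ × ℝ,
      (∫ y : ℝ × ℝ,
          Real.log (ε / nrm (x - y)) * (ε⁻¹ ^ 2 * ϱ ((y.1 - z.1) / ε, (y.2 - z.2) / ε)))
        ≤ ∫ y : ℝ × ℝ, Real.log (1 / nrm y) * ϱ y := by
  intro x
  have hεne : ε ≠ 0 := ne_of_gt hε
  set x' : ℝ × ℝ := ε⁻¹ • (x - z) with hx'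
  set F : ℝ × ℝ → ℝ := fun y =>
    Real.log (ε / nrm (x - y)) * (ε⁻¹ ^ 2 * ϱ ((y.1 - z.1) / ε, (y.2 - z.2) / ε)) with hF
  have hpt : ∀ w : ℝ × ℝ, F (ε • w + z) = Real.log (1 / nrm (w - x')) * (ε⁻¹ ^ 2 * ϱ w) := by
    intro w
    have h1 : ((ε • w + z).1 - z.1) / ε = w.1 := by
      simp only [Prod.fst_add, Prod.smul_fst, smul_eq_mul, add_sub_cancel_right]
      field_simp
    have h2 : ((ε • w + z).2 - z.2) / ε = w.2 := by
      simp only [Prod.snd_add, Prod.smul_snd, smul_eq_mul, add_sub_cancel_right]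
      field_simp
    have h3 : x - (ε • w + z) = ε • (x' - w) := by
      rw [hx', smul_sub, smul_inv_smul₀ hεne]
      abel
    simp only [hF, h1, h2, h3, nrm_smul hε.le]
    rw [div_mul_eq_div_div, div_self hεne, nrm_sub_comm x' w]
  have e2 : (∫ w : ℝ × ℝ, F (ε • w + z)) = (ε ^ 2)⁻¹ • ∫ v, F (v + z) := by
    have h := Measure.integral_comp_smul_of_nonneg (μ := volume) (fun v => F (v + z)) ε
      (hR := hε.le)
    rw [show Module.finrank ℝ (ℝ × ℝ) = 2 by simp] at h
    exact h
  have hchange : (∫ y, F y) = ∫ w, Real.log (1 / nrm (w - x')) * ϱ w := by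
    have e1 : (∫ y, F y) = ∫ v, F (v + z) := (integral_add_right_eq_self F z).symm
    have e3 : (∫ v, F (v + z)) = ε ^ 2 * ∫ w : ℝ × ℝ, F (ε • w + z) := by
      rw [e2, smul_eq_mul, ← mul_assoc, mul_inv_cancel₀ (pow_ne_zero 2 hεne), one_mul]
    calc (∫ y, F y) = ε ^ 2 * ∫ w : ℝ × ℝ, F (ε • w + z) := by rw [e1, e3]
      _ = ∫ w : ℝ × ℝ, ε ^ 2 * F (ε • w + z) := (integral_const_mul _ _).symm
      _ = ∫ w, Real.log (1 / nrm (w - x')) * ϱ w := by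
          apply integral_congr_ae
          filter_upwards with w
          rw [hpt w]
          field_simp
  have hKx' : Integrable (fun w => Real.log (1 / nrm (w - x')) * ϱ w) := by
    have h0 : Integrable F := hintk x
    have h1 : Integrable (fun v => F (v + z)) := h0.comp_add_right z
    have h2 : Integrable (fun w : ℝ × ℝ => F (ε • w + z)) := h1.comp_smul hεne
    have h3 : Integrable (fun w : ℝ × ℝ => ε ^ 2 * F (ε • w + z)) := h2.const_mul _
    apply h3.congr
    filter_upwards with w
    rw [hpt w]
    field_simp
  show (∫ y, F y) ≤ _
  rw [hchange]
  exact key_mono ϱ hnonneg hint hdec x' hKx' hlog
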